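/- Let L ∈ Σ[∂] be monic of prime order n with nontrivial centralizer Z(L) ≠ C[L]. Then L is algebro-geometric, i.e. the gcd of the orders of nonzero elements of Z(L) equals 1. -/

import Mathlib

open scoped Classical
noncomputable section

variable {R : Type} [Ring R]

/-- Left multiplication by `a` as an additive endomorphism of `R`. -/
def mulOp (a : R) : AddMonoid.End R := AddMonoidHom.mulLeft a

/-- The derivation as an additive endomorphism. -/
def derOp (d : R →+ R) : AddMonoid.End R := d

/-- `d` satisfies the Leibniz rule. -/
def IsDeriv (d : R →+ R) : Prop := ∀ a b : R, d (a * b) = d a * b + a * d b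

/-- Additive group of differential operators of order at most `n`:
sums of terms `a · ∂^i` with `i ≤ n`. -/
def OpLE (d : R →+ R) (n : ℕ) : AddSubgroup (AddMonoid.End R) :=
  AddSubgroup.closure {P | ∃ (a : R) (i : ℕ), i ≤ n ∧ P = mulOp a * derOp d ^ i}

/-- `L` is a differential operator. -/
def IsOp (d : R →+ R) (L : AddMonoid.End R) : Prop := ∃ n, L ∈ OpLE d n

/-- `L` is a differential operator of exact order `n`. -/
def HasOrd (d : R →+ R) (L : AddMonoid.End R) (n : ℕ) : Prop :=
  L ∈ OpLE d n ∧ ∀ k, L ∈ OpLE d k → n ≤ k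

/-- `L` is a monic differential operator of order `n`. -/
def MonicOrd (d : R →+ R) (L : AddMonoid.End R) (n : ℕ) : Prop :=
  HasOrd d L n ∧ L - derOp d ^ n ∈ OpLE d (n - 1)

/-- The centralizer of `L` in the ring of differential operators. -/
def Cent (d : R →+ R) (L : AddMonoid.End R) : Set (AddMonoid.End R) :=
  {A | IsOp d A ∧ L * A = A * L}

/-- Polynomials in `L` with constant coefficients. -/
def CPoly (d : R →+ R) (L : AddMonoid.End R) : Set (AddMonoid.End R) :=
  {P | ∃ p : Polynomial R, (∀ k, d (p.coeff k) = 0) ∧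
      P = ∑ i ∈ Finset.range (p.natDegree + 1), mulOp (p.coeff i) * L ^ i}

/-- The level of `L`: smallest order of an element of `Z(L) \ C[L]`. -/
def Level (d : R →+ R) (L : AddMonoid.End R) (M : ℕ) : Prop :=
  (∃ Q ∈ Cent d L, Q ∉ CPoly d L ∧ HasOrd d Q M) ∧
  ∀ Q ∈ Cent d L, Q ∉ CPoly d L → ∀ q, HasOrd d Q q → M ≤ q

section basic
variable {F : Type} [Field F] (d : F →+ F)

lemma endExt {P Q : AddMonoid.End F} (h : ∀ x, P x = Q x) : P = Q := AddMonoidHom.ext h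

lemma end_mul_apply (P Q : AddMonoid.End F) (x : F) : (P * Q) x = P (Q x) := rfl

lemma mulOp_apply (a x : F) : mulOp a x = a * x := rfl
lemma derOp_apply (x : F) : derOp d x = d x := rfl

lemma mulOp_mul (a b : F) : mulOp (a * b) = mulOp a * mulOp b := by
  refine endExt fun x => ?_
  simp [mulOp_apply, end_mul_apply, mul_assoc]

lemma mulOp_add (a b : F) : mulOp (a + b) = mulOp a + mulOp b := by
  refine endExt fun x => ?_
  show (a + b) * x = a * x + b * x
  ring

lemma mulOp_zero : mulOp (0 : F) = 0 := by
  refine endExt fun x => ?_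
  show (0:F) * x = 0
  ring

lemma mulOp_one : mulOp (1 : F) = 1 := by
  refine endExt fun x => ?_
  show (1:F) * x = x
  ring

lemma mulOp_neg (a : F) : mulOp (-a) = - mulOp a := by
  refine endExt fun x => ?_
  show (-a) * x = -(a * x)
  ring

lemma mulOp_eq_zero {a : F} (h : mulOp a = 0) : a = 0 := by
  have := congrArg (fun P : AddMonoid.End F => P 1) h
  simpa [mulOp_apply] using this

lemma mulOp_nsmul (k : ℕ) (a : F) : mulOp ((k : F) * a) = k • mulOp a := by
  refine endExt fun x => ?_
  show ((k : F) * a) * x = (k • mulOp a) x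
  have : (k • mulOp a) x = k • (mulOp a x) := by
    induction k with
    | zero => simp
    | succ j ih => rw [succ_nsmul, succ_nsmul, ← ih]; rfl
  rw [this, mulOp_apply, nsmul_eq_mul]
  ring

lemma der_mulOp (hd : IsDeriv d) (b : F) :
    derOp d * mulOp b = mulOp b * derOp d + mulOp (d b) := by
  refine endExt fun x => ?_
  show d (b * x) = b * d x + d b * x
  rw [hd b x]; ring

end basic

section ople
variable {F : Type} [Field F] (d : F →+ F)

/-- canonical sum form -/
def opOf (f : ℕ → F) (m : ℕ) : AddMonoid.End F :=
  ∑ i ∈ Finset.range (m + 1), mulOp (f i) * derOp d ^ i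

lemma opOf_mem (f : ℕ → F) (m : ℕ) : opOf d f m ∈ OpLE d m := by
  refine AddSubgroup.sum_mem _ fun i hi => ?_
  exact AddSubgroup.subset_closure ⟨f i, i, by simpa using Nat.lt_succ_iff.mp (Finset.mem_range.mp hi), rfl⟩

lemma opOf_add (f g : ℕ → F) (m : ℕ) :
    opOf d (fun i => f i + g i) m = opOf d f m + opOf d g m := by
  unfold opOf
  rw [← Finset.sum_add_distrib]
  refine Finset.sum_congr rfl fun i _ => ?_
  rw [mulOp_add, add_mul]

lemma opOf_neg (f : ℕ → F) (m : ℕ) :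
    opOf d (fun i => - f i) m = - opOf d f m := by
  unfold opOf
  rw [← Finset.sum_neg_distrib]
  refine Finset.sum_congr rfl fun i _ => ?_
  rw [mulOp_neg]; exact neg_mul (mulOp (f i)) (derOp d ^ i)

lemma opOf_congr {f g : ℕ → F} (m : ℕ) (h : ∀ i ≤ m, f i = g i) :
    opOf d f m = opOf d g m := by
  refine Finset.sum_congr rfl fun i hi => ?_
  rw [h i (Nat.lt_succ_iff.mp (Finset.mem_range.mp hi))]

lemma opOf_succ (f : ℕ → F) (m : ℕ) :
    opOf d f (m + 1) = opOf d f m + mulOp (f (m + 1)) * derOp d ^ (m + 1) :=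
  Finset.sum_range_succ _ _

lemma mem_OpLE_iff {P : AddMonoid.End F} {m : ℕ} :
    P ∈ OpLE d m ↔ ∃ f : ℕ → F, P = opOf d f m := by
  constructor
  · intro hP
    let K : AddSubgroup (AddMonoid.End F) :=
      { carrier := {P | ∃ f : ℕ → F, P = opOf d f m}
        zero_mem' := ⟨fun _ => 0, by
          unfold opOf; rw [eq_comm, Finset.sum_eq_zero]; intro i _; rw [mulOp_zero, zero_mul]⟩
        add_mem' := by
          rintro P Q ⟨f, rfl⟩ ⟨g, rfl⟩
          exact ⟨fun i => f i + g i, (opOf_add d f g m).symm⟩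
        neg_mem' := by
          rintro P ⟨f, rfl⟩
          exact ⟨fun i => - f i, (opOf_neg d f m).symm⟩ }
    have hle : OpLE d m ≤ K := by
      rw [OpLE, AddSubgroup.closure_le]
      rintro P ⟨a, i, him, rfl⟩
      refine ⟨fun j => if j = i then a else 0, ?_⟩
      unfold opOf
      rw [eq_comm, Finset.sum_eq_single i]
      · simp
      · intro j _ hji; simp [hji, mulOp_zero]
      · intro h; exact absurd (Finset.mem_range.mpr (Nat.lt_succ_of_le him)) h
    exact hle hP
  · rintro ⟨f, rfl⟩; exact opOf_mem d f m

lemma OpLE_mono {m k : ℕ} (h : m ≤ k) : OpLE d m ≤ OpLE d k := by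
  rw [OpLE, AddSubgroup.closure_le]
  rintro P ⟨a, i, him, rfl⟩
  exact AddSubgroup.subset_closure ⟨a, i, le_trans him h, rfl⟩

end ople

section prod
variable {F : Type} [Field F] {d : F →+ F}

lemma mulOp_mul_OpLE {j : ℕ} (a : F) {P : AddMonoid.End F} (hP : P ∈ OpLE d j) :
    mulOp a * P ∈ OpLE d j := by
  have hle : OpLE d j ≤ (OpLE d j).comap (AddMonoidHom.mulLeft (mulOp a)) := by
    rw [OpLE, AddSubgroup.closure_le]
    rintro P ⟨b, i, hi, rfl⟩
    show mulOp a * (mulOp b * derOp d ^ i) ∈ OpLE d j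
    rw [← mul_assoc, ← mulOp_mul]
    exact AddSubgroup.subset_closure ⟨a * b, i, hi, rfl⟩
  exact hle hP

lemma OpLE_mul_derPow {j : ℕ} (l : ℕ) {P : AddMonoid.End F} (hP : P ∈ OpLE d j) :
    P * derOp d ^ l ∈ OpLE d (j + l) := by
  have hle : OpLE d j ≤ (OpLE d (j + l)).comap (AddMonoidHom.mulRight (derOp d ^ l)) := by
    rw [OpLE, AddSubgroup.closure_le]
    rintro P ⟨b, i, hi, rfl⟩
    show mulOp b * derOp d ^ i * derOp d ^ l ∈ OpLE d (j + l)
    rw [mul_assoc, ← pow_add]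
    exact AddSubgroup.subset_closure ⟨b, i + l, Nat.add_le_add hi le_rfl, rfl⟩
  exact hle hP

lemma derOp_mul_OpLE (hd : IsDeriv d) {j : ℕ} {P : AddMonoid.End F} (hP : P ∈ OpLE d j) :
    derOp d * P ∈ OpLE d (j + 1) := by
  have hle : OpLE d j ≤ (OpLE d (j + 1)).comap (AddMonoidHom.mulLeft (derOp d)) := by
    rw [OpLE, AddSubgroup.closure_le]
    rintro P ⟨b, i, hi, rfl⟩
    show derOp d * (mulOp b * derOp d ^ i) ∈ OpLE d (j + 1)
    rw [← mul_assoc, der_mulOp d hd, add_mul, mul_assoc, ← pow_succ']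
    refine AddSubgroup.add_mem _ ?_ ?_
    · exact AddSubgroup.subset_closure ⟨b, i + 1, Nat.add_le_add hi le_rfl, rfl⟩
    · exact AddSubgroup.subset_closure ⟨d b, i, le_trans hi (Nat.le_succ j), rfl⟩
  exact hle hP

lemma derPow_mul_OpLE (hd : IsDeriv d) {j : ℕ} (i : ℕ) {P : AddMonoid.End F}
    (hP : P ∈ OpLE d j) : derOp d ^ i * P ∈ OpLE d (i + j) := by
  induction i with
  | zero => simpa using hP
  | succ k ih =>
    have := derOp_mul_OpLE hd ih
    rw [← mul_assoc, ← pow_succ'] at this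
    have h2 : k + j + 1 = k + 1 + j := by omega
    rwa [h2] at this

lemma OpLE_mul (hd : IsDeriv d) {i j : ℕ} {P S : AddMonoid.End F}
    (hP : P ∈ OpLE d i) (hS : S ∈ OpLE d j) : P * S ∈ OpLE d (i + j) := by
  have hle : OpLE d i ≤ (OpLE d (i + j)).comap (AddMonoidHom.mulRight S) := by
    rw [OpLE, AddSubgroup.closure_le]
    rintro P ⟨b, r, hr, rfl⟩
    show mulOp b * derOp d ^ r * S ∈ OpLE d (i + j)
    rw [mul_assoc]
    refine mulOp_mul_OpLE b ?_
    have := derPow_mul_OpLE hd r hS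
    exact OpLE_mono d (by omega) this
  exact hle hP

end prod

section expand
variable {F : Type} [Field F] {d : F →+ F}

private lemma derPow_mulOp_aux (hd : IsDeriv d) (b : F) (i : ℕ) :
    ∃ E ∈ OpLE d i, derOp d ^ (i + 2) * mulOp b
      = mulOp b * derOp d ^ (i + 2) + (i + 2) • (mulOp (d b) * derOp d ^ (i + 1)) + E := by
  have key : ∀ (c : F) (l : ℕ), derOp d * (mulOp c * derOp d ^ l)
      = mulOp c * derOp d ^ (l + 1) + mulOp (d c) * derOp d ^ l := by
    intro c l
    rw [← mul_assoc, der_mulOp d hd, add_mul, mul_assoc, ← pow_succ']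
  induction i with
  | zero =>
    refine ⟨mulOp (d (d b)), ?_, ?_⟩
    · have : mulOp (d (d b)) = mulOp (d (d b)) * derOp d ^ 0 := by rw [pow_zero, mul_one]
      rw [this]; exact AddSubgroup.subset_closure ⟨d (d b), 0, le_rfl, rfl⟩
    · have h1 : derOp d ^ (0 + 2) * mulOp b = derOp d * (derOp d * mulOp b) := by
        rw [← mul_assoc]; norm_num; rw [← pow_two]
      have h2 : derOp d * mulOp b = mulOp b * derOp d ^ 1 + mulOp (d b) * derOp d ^ 0 := by
        rw [pow_one, pow_zero, mul_one, der_mulOp d hd]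
      rw [h1, h2, mul_add, key, key]
      rw [two_nsmul]
      norm_num
      abel
  | succ k ih =>
    obtain ⟨E, hE, hEq⟩ := ih
    refine ⟨(k + 2) • (mulOp (d (d b)) * derOp d ^ (k + 1)) + derOp d * E, ?_, ?_⟩
    · refine AddSubgroup.add_mem _ ?_ ?_
      · refine AddSubgroup.nsmul_mem _ ?_ _
        exact AddSubgroup.subset_closure ⟨d (d b), k + 1, le_rfl, rfl⟩
      · exact derOp_mul_OpLE hd hE
    · have h1 : derOp d ^ (k + 1 + 2) * mulOp b = derOp d * (derOp d ^ (k + 2) * mulOp b) := by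
        rw [← mul_assoc, ← pow_succ']
      rw [h1, hEq, mul_add, mul_add, key]
      rw [mul_smul_comm, key, nsmul_add]
      have e1 : k + 2 + 1 = k + 1 + 2 := by omega
      rw [e1, succ_nsmul (mulOp (d b) * derOp d ^ (k + 1 + 1)) (k + 2)]
      have e2 : k + 1 + 1 = k + 2 := by omega
      rw [e2]
      abel

/-- Two-term expansion: `D^i * b = b * D^i + i * (db) * D^(i-1) + E` with `E` of order `≤ i-2`. -/
lemma derPow_mulOp (hd : IsDeriv d) (b : F) (i : ℕ) :
    ∃ E, (E ∈ OpLE d (i - 2) ∧ (i ≤ 1 → E = 0)) ∧ derOp d ^ i * mulOp b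
      = mulOp b * derOp d ^ i + i • (mulOp (d b) * derOp d ^ (i - 1)) + E := by
  match i with
  | 0 => exact ⟨0, ⟨AddSubgroup.zero_mem _, fun _ => rfl⟩, by simp⟩
  | 1 =>
    refine ⟨0, ⟨AddSubgroup.zero_mem _, fun _ => rfl⟩, ?_⟩
    simp only [pow_one, one_smul, Nat.sub_self, pow_zero, mul_one, add_zero]
    exact der_mulOp d hd b
  | (k + 2) =>
    obtain ⟨E, hE, hEq⟩ := derPow_mulOp_aux hd b k
    exact ⟨E, ⟨by simpa using hE, by omega⟩, by simpa using hEq⟩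

end expand

section comm
variable {F : Type} [Field F] {d : F →+ F}

lemma comm_der_OpLE (hd : IsDeriv d) {j : ℕ} {P : AddMonoid.End F} (hP : P ∈ OpLE d j) :
    derOp d * P - P * derOp d ∈ OpLE d j := by
  have hle : OpLE d j ≤ (OpLE d j).comap
      (AddMonoidHom.mulLeft (derOp d) - AddMonoidHom.mulRight (derOp d)) := by
    rw [OpLE, AddSubgroup.closure_le]
    rintro P ⟨a, i, hi, rfl⟩
    show derOp d * (mulOp a * derOp d ^ i) - mulOp a * derOp d ^ i * derOp d ∈ OpLE d j
    rw [← mul_assoc, der_mulOp d hd, add_mul, mul_assoc, ← pow_succ', pow_succ, ← mul_assoc,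
      add_sub_cancel_left]
    exact AddSubgroup.subset_closure ⟨d a, i, hi, rfl⟩
  exact hle hP

lemma comm_derPow_OpLE (hd : IsDeriv d) {j : ℕ} (l : ℕ) {P : AddMonoid.End F}
    (hP : P ∈ OpLE d j) : derOp d ^ l * P - P * derOp d ^ l ∈ OpLE d (l + j - 1) := by
  induction l with
  | zero => simpa using AddSubgroup.zero_mem _
  | succ k ih =>
    rcases Nat.eq_zero_or_pos k with rfl | hk
    · have e : 0 + 1 + j - 1 = j := by omega
      rw [e, pow_one]
      exact comm_der_OpLE hd hP
    have key : derOp d ^ (k + 1) * P - P * derOp d ^ (k + 1)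
        = derOp d * (derOp d ^ k * P - P * derOp d ^ k)
          + (derOp d * P - P * derOp d) * derOp d ^ k := by
      rw [pow_succ']
      simp only [mul_sub, sub_mul, mul_assoc]
      abel
    rw [key]
    refine AddSubgroup.add_mem _ ?_ ?_
    · exact OpLE_mono d (show k + j - 1 + 1 ≤ k + 1 + j - 1 by omega) (derOp_mul_OpLE hd ih)
    · exact OpLE_mono d (show j + k ≤ k + 1 + j - 1 by omega)
        (OpLE_mul_derPow k (comm_der_OpLE hd hP))

lemma comm_OpLE_mulOp (hd : IsDeriv d) {i : ℕ} (b : F) {P : AddMonoid.End F}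
    (hP : P ∈ OpLE d i) : P * mulOp b - mulOp b * P ∈ OpLE d (i - 1) := by
  have hle : OpLE d i ≤ (OpLE d (i - 1)).comap
      (AddMonoidHom.mulRight (mulOp b) - AddMonoidHom.mulLeft (mulOp b)) := by
    rw [OpLE, AddSubgroup.closure_le]
    rintro P ⟨a, r, hr, rfl⟩
    show mulOp a * derOp d ^ r * mulOp b - mulOp b * (mulOp a * derOp d ^ r) ∈ OpLE d (i - 1)
    obtain ⟨E, ⟨hE, -⟩, hEq⟩ := derPow_mulOp hd b r
    have key : mulOp a * derOp d ^ r * mulOp b - mulOp b * (mulOp a * derOp d ^ r)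
        = mulOp a * (r • (mulOp (d b) * derOp d ^ (r - 1)) + E) := by
      rw [mul_assoc, hEq]
      have hba : mulOp b * (mulOp a * derOp d ^ r) = mulOp a * (mulOp b * derOp d ^ r) := by
        rw [← mul_assoc, ← mul_assoc, ← mulOp_mul, ← mulOp_mul, mul_comm b a]
      rw [hba]
      noncomm_ring
    rw [key]
    refine mulOp_mul_OpLE a (AddSubgroup.add_mem _ ?_ (OpLE_mono d (by omega) hE))
    refine AddSubgroup.nsmul_mem _ ?_ _
    refine OpLE_mono d (by omega : r - 1 ≤ i - 1) ?_
    exact AddSubgroup.subset_closure ⟨d b, r - 1, le_rfl, rfl⟩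
  exact hle hP

lemma comm_OpLE_OpLE (hd : IsDeriv d) {i j : ℕ} (hi : 1 ≤ i) {P Q : AddMonoid.End F}
    (hP : P ∈ OpLE d i) (hQ : Q ∈ OpLE d j) : P * Q - Q * P ∈ OpLE d (i + j - 1) := by
  have hle : OpLE d j ≤ (OpLE d (i + j - 1)).comap
      (AddMonoidHom.mulLeft P - AddMonoidHom.mulRight P) := by
    rw [OpLE, AddSubgroup.closure_le]
    rintro Q ⟨b, l, hl, rfl⟩
    show P * (mulOp b * derOp d ^ l) - mulOp b * derOp d ^ l * P ∈ OpLE d (i + j - 1)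
    have key : P * (mulOp b * derOp d ^ l) - mulOp b * derOp d ^ l * P
        = (P * mulOp b - mulOp b * P) * derOp d ^ l
          - mulOp b * (derOp d ^ l * P - P * derOp d ^ l) := by
      simp only [sub_mul, mul_sub, mul_assoc]
      abel
    rw [key]
    refine AddSubgroup.sub_mem _ ?_ ?_
    · have := OpLE_mul_derPow l (comm_OpLE_mulOp hd b hP)
      exact OpLE_mono d (by omega) this
    · refine mulOp_mul_OpLE b
        (OpLE_mono d (show l + i - 1 ≤ i + j - 1 by omega) (comm_derPow_OpLE hd l hP))
  exact hle hQ

end comm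

section indep
variable {F : Type} [Field F] {d : F →+ F}

lemma opOf_zero_deg (f : ℕ → F) : opOf d f 0 = mulOp (f 0) := by
  unfold opOf
  rw [Finset.sum_range_one, pow_zero, mul_one]

lemma indep [CharZero F] (hd : IsDeriv d) (hx : ∃ x, d x ≠ 0) :
    ∀ (m : ℕ) (f : ℕ → F), opOf d f m = 0 → ∀ i ≤ m, f i = 0 := by
  intro m
  induction m with
  | zero =>
    intro f h i hi
    interval_cases i
    rw [opOf_zero_deg] at h
    exact mulOp_eq_zero h
  | succ m ih =>
    intro f h
    obtain ⟨x, hx0⟩ := hx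
    choose E hEp hEq using fun i => derPow_mulOp hd x i
    have hEmem : ∀ i, E i ∈ OpLE d (i - 2) := fun i => (hEp i).1
    have hEzero : ∀ i, i ≤ 1 → E i = 0 := fun i => (hEp i).2
    -- commutator of 0 with mulOp x is 0
    have hcomm : ∑ i ∈ Finset.range (m + 2),
        (mulOp (f i) * derOp d ^ i * mulOp x - mulOp x * (mulOp (f i) * derOp d ^ i)) = 0 := by
      rw [Finset.sum_sub_distrib, ← Finset.sum_mul, ← Finset.mul_sum]
      have hP : ∑ i ∈ Finset.range (m + 2), mulOp (f i) * derOp d ^ i = 0 := by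
        rw [← h]; rfl
      rw [hP, zero_mul, mul_zero, sub_zero]
    have hterm : ∀ i, mulOp (f i) * derOp d ^ i * mulOp x - mulOp x * (mulOp (f i) * derOp d ^ i)
        = mulOp ((i : F) * (f i * d x)) * derOp d ^ (i - 1) + mulOp (f i) * E i := by
      intro i
      have h1 : mulOp x * (mulOp (f i) * derOp d ^ i) = mulOp (f i) * (mulOp x * derOp d ^ i) := by
        rw [← mul_assoc, ← mul_assoc, ← mulOp_mul, ← mulOp_mul, mul_comm x (f i)]
      rw [mul_assoc, hEq i, h1, mul_add, mul_add]
      have h2 : mulOp (f i) * (i • (mulOp (d x) * derOp d ^ (i - 1)))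
          = mulOp ((i : F) * (f i * d x)) * derOp d ^ (i - 1) := by
        rw [mul_smul_comm, ← mul_assoc, ← mulOp_mul, mulOp_nsmul, smul_mul_assoc]
      rw [h2]
      abel
    rw [Finset.sum_congr rfl (fun i _ => hterm i), Finset.sum_add_distrib,
      Finset.sum_range_succ] at hcomm
    -- the top term equals minus the rest, which has small order
    set c : F := ((m + 1 : ℕ) : F) * (f (m + 1) * d x) with hc
    have hrest1 : ∀ i ∈ Finset.range (m + 1),
        mulOp ((i : F) * (f i * d x)) * derOp d ^ (i - 1) ∈ OpLE d (m - 1) ∨ True := fun _ _ => Or.inr trivial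
    have htop : f (m + 1) = 0 := by
      have hc0 : c = 0 := by
        rcases Nat.eq_zero_or_pos m with rfl | hm
        · -- m = 0 : everything else vanishes
          have e0 : ∑ i ∈ Finset.range 1, mulOp ((i : F) * (f i * d x)) * derOp d ^ (i - 1) = 0 := by
            rw [Finset.sum_range_one]
            norm_num [mulOp_zero]
          have e1 : ∑ i ∈ Finset.range 2, mulOp (f i) * E i = 0 := by
            rw [Finset.sum_range_succ, Finset.sum_range_one,
              hEzero 0 (by omega), hEzero 1 (by omega), mul_zero, mul_zero, add_zero]
          rw [e0, zero_add, e1, add_zero] at hcomm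
          have : mulOp c = 0 := by
            have := hcomm
            rwa [Nat.zero_add, pow_zero, mul_one] at this
          exact mulOp_eq_zero this
        · -- m ≥ 1
          have hW : mulOp c * derOp d ^ (m + 1 - 1) ∈ OpLE d (m - 1) := by
            have hWmem : (∑ i ∈ Finset.range (m + 1), mulOp ((i : F) * (f i * d x)) * derOp d ^ (i - 1))
                + ∑ i ∈ Finset.range (m + 2), mulOp (f i) * E i ∈ OpLE d (m - 1) := by
              refine AddSubgroup.add_mem _ ?_ ?_
              · refine AddSubgroup.sum_mem _ fun i hi => ?_
                have hi' : i ≤ m := Nat.lt_succ_iff.mp (Finset.mem_range.mp hi)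
                refine OpLE_mono d (show i - 1 ≤ m - 1 by omega) ?_
                exact AddSubgroup.subset_closure ⟨_, i - 1, le_rfl, rfl⟩
              · refine AddSubgroup.sum_mem _ fun i hi => ?_
                have hi' : i ≤ m + 1 := Nat.lt_succ_iff.mp (Finset.mem_range.mp hi)
                refine mulOp_mul_OpLE _ (OpLE_mono d (show i - 2 ≤ m - 1 by omega) (hEmem i))
            have hck : mulOp c * derOp d ^ (m + 1 - 1)
                = -((∑ i ∈ Finset.range (m + 1), mulOp ((i : F) * (f i * d x)) * derOp d ^ (i - 1))
                  + ∑ i ∈ Finset.range (m + 2), mulOp (f i) * E i) := by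
              linear_combination (norm := abel) hcomm
            rw [hck]
            exact AddSubgroup.neg_mem _ hWmem
          -- turn into an opOf equation and use IH
          have e : m + 1 - 1 = m := by omega
          rw [e] at hW
          obtain ⟨g, hg⟩ := (mem_OpLE_iff d).mp hW
          have hzero : opOf d (fun i => if i = m then c else - g i) m = 0 := by
            have e2 : m - 1 + 1 = m := by omega
            have e3 := opOf_succ d (fun i => if i = m then c else - g i) (m - 1)
            rw [e2] at e3
            rw [e3]
            have e4 : opOf d (fun i => if i = m then c else - g i) (m - 1)
                = opOf d (fun i => - g i) (m - 1) := by
              refine opOf_congr d (m - 1) fun i hi => ?_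
              rw [if_neg (by omega)]
            have e5 : (if m = m then c else - g m) = c := if_pos rfl
            rw [e4, e5, opOf_neg, ← hg]
            abel
          have := ih _ hzero m le_rfl
          simpa using this
      -- from c = 0 deduce f (m+1) = 0
      rw [hc] at hc0
      have hm1 : ((m + 1 : ℕ) : F) ≠ 0 := Nat.cast_ne_zero.mpr (by omega)
      rcases mul_eq_zero.mp hc0 with h' | h'
      · exact absurd h' hm1
      · rcases mul_eq_zero.mp h' with h'' | h''
        · exact h''
        · exact absurd h'' hx0
    intro i hi
    rcases eq_or_lt_of_le hi with rfl | hlt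
    · exact htop
    · have hle : i ≤ m := by omega
      rw [opOf_succ, htop, mulOp_zero, zero_mul, add_zero] at h
      exact ih f h i hle
end indep

section topcoeff
variable {F : Type} [Field F] {d : F →+ F}

lemma mulOp_derPow_small [CharZero F] (hd : IsDeriv d) (hx : ∃ x, d x ≠ 0) {r : ℕ}
    (hr : 1 ≤ r) {b : F} (h : mulOp b * derOp d ^ r ∈ OpLE d (r - 1)) : b = 0 := by
  obtain ⟨g, hg⟩ := (mem_OpLE_iff d).mp h
  have hzero : opOf d (fun i => if i = r then b else - g i) r = 0 := by
    have e2 : r - 1 + 1 = r := by omega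
    have e3 := opOf_succ d (fun i => if i = r then b else - g i) (r - 1)
    rw [e2] at e3
    rw [e3]
    have e4 : opOf d (fun i => if i = r then b else - g i) (r - 1)
        = opOf d (fun i => - g i) (r - 1) := by
      refine opOf_congr d (r - 1) fun i hi => ?_
      rw [if_neg (by omega)]
    have e5 : (if r = r then b else - g r) = b := if_pos rfl
    rw [e4, e5, opOf_neg, ← hg]
    abel
  have := indep hd hx r _ hzero r le_rfl
  simpa using this

end topcoeff

section keyB
variable {F : Type} [Field F] {d : F →+ F}

/-- Leading coefficient of an operator commuting with a monic operator is a constant. -/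
lemma const_lead [CharZero F] (hd : IsDeriv d) (hx : ∃ x, d x ≠ 0) {n m : ℕ} (hn : 2 ≤ n)
    {L Q : AddMonoid.End F} (hLm : L - derOp d ^ n ∈ OpLE d (n - 1)) {a : F}
    {T : AddMonoid.End F}
    (hQT : Q = mulOp a * derOp d ^ m + T) (hT : (1 ≤ m ∧ T ∈ OpLE d (m - 1)) ∨ T = 0)
    (hcomm : L * Q = Q * L) : d a = 0 := by
  set R := L - derOp d ^ n with hR
  have hLR : L = derOp d ^ n + R := by rw [hR]; abel
  obtain ⟨E, ⟨hE, -⟩, hEq⟩ := derPow_mulOp hd a n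
  have hQm : Q ∈ OpLE d m := by
    rw [hQT]
    refine AddSubgroup.add_mem _ (AddSubgroup.subset_closure ⟨a, m, le_rfl, rfl⟩) ?_
    rcases hT with ⟨-, hT⟩ | rfl
    · exact OpLE_mono d (by omega) hT
    · exact AddSubgroup.zero_mem _
  have core : derOp d ^ n * (mulOp a * derOp d ^ m) - (mulOp a * derOp d ^ m) * derOp d ^ n
      = n • (mulOp (d a) * derOp d ^ (n - 1 + m)) + E * derOp d ^ m := by
    rw [← mul_assoc, hEq, add_mul, add_mul, smul_mul_assoc,
      mul_assoc (mulOp a) (derOp d ^ n), ← pow_add,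
      mul_assoc (mulOp a) (derOp d ^ m), ← pow_add,
      mul_assoc (mulOp (d a)), ← pow_add, show m + n = n + m by omega]
    abel
  have h2 : derOp d ^ n * Q - Q * derOp d ^ n
      = n • (mulOp (d a) * derOp d ^ (n - 1 + m)) + E * derOp d ^ m
        + (derOp d ^ n * T - T * derOp d ^ n) := by
    rw [hQT, mul_add, add_mul]
    linear_combination (norm := abel) core
  have dist : (derOp d ^ n + R) * Q - Q * (derOp d ^ n + R)
      = (derOp d ^ n * Q - Q * derOp d ^ n) + (R * Q - Q * R) := by noncomm_ring
  have key : (0 : AddMonoid.End F)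
      = n • (mulOp (d a) * derOp d ^ (n - 1 + m))
        + (E * derOp d ^ m + (derOp d ^ n * T - T * derOp d ^ n) + (R * Q - Q * R)) := by
    calc (0 : AddMonoid.End F) = L * Q - Q * L := by rw [hcomm]; abel
    _ = (derOp d ^ n * Q - Q * derOp d ^ n) + (R * Q - Q * R) := by rw [← dist, ← hLR]
    _ = n • (mulOp (d a) * derOp d ^ (n - 1 + m))
        + (E * derOp d ^ m + (derOp d ^ n * T - T * derOp d ^ n) + (R * Q - Q * R)) := by
      rw [h2]; abel
  have hW : n • (mulOp (d a) * derOp d ^ (n - 1 + m)) ∈ OpLE d (n - 1 + m - 1) := by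
    have hWmem : E * derOp d ^ m + (derOp d ^ n * T - T * derOp d ^ n) + (R * Q - Q * R)
        ∈ OpLE d (n - 1 + m - 1) := by
      refine AddSubgroup.add_mem _ (AddSubgroup.add_mem _ ?_ ?_) ?_
      · exact OpLE_mono d (show n - 2 + m ≤ n - 1 + m - 1 by omega) (OpLE_mul_derPow m hE)
      · rcases hT with ⟨hm1, hT⟩ | rfl
        · exact OpLE_mono d (show n + (m - 1) - 1 ≤ n - 1 + m - 1 by omega)
            (comm_derPow_OpLE hd n hT)
        · simpa using AddSubgroup.zero_mem _
      · exact OpLE_mono d (show n - 1 + m - 1 ≤ n - 1 + m - 1 by omega)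
          (comm_OpLE_OpLE hd (show 1 ≤ n - 1 by omega) hLm hQm)
    have : n • (mulOp (d a) * derOp d ^ (n - 1 + m))
        = -(E * derOp d ^ m + (derOp d ^ n * T - T * derOp d ^ n) + (R * Q - Q * R)) := by
      have h4 := key.symm
      rw [add_eq_zero_iff_eq_neg] at h4
      exact h4
    rw [this]
    exact AddSubgroup.neg_mem _ hWmem
  have hsm : n • (mulOp (d a) * derOp d ^ (n - 1 + m))
      = mulOp ((n : F) * d a) * derOp d ^ (n - 1 + m) := by
    rw [mulOp_nsmul, smul_mul_assoc]
  rw [hsm] at hW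
  have hzero : ((n : F) * d a) = 0 :=
    mulOp_derPow_small hd hx (show 1 ≤ n - 1 + m by omega) hW
  rcases mul_eq_zero.mp hzero with h' | h'
  · exact absurd h' (Nat.cast_ne_zero.mpr (by omega))
  · exact h'

end keyB

section constants
variable {F : Type} [Field F] {d : F →+ F}

lemma derPow_mulOp_const (hd : IsDeriv d) {c : F} (hc : d c = 0) (r : ℕ) :
    derOp d ^ r * mulOp c = mulOp c * derOp d ^ r := by
  induction r with
  | zero => rw [pow_zero, one_mul, mul_one]
  | succ k ih =>
    rw [pow_succ', mul_assoc, ih, ← mul_assoc, der_mulOp d hd, hc, mulOp_zero, add_zero,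
      mul_assoc, ← pow_succ']

lemma const_comm (hd : IsDeriv d) {c : F} (hc : d c = 0) {j : ℕ} {P : AddMonoid.End F}
    (hP : P ∈ OpLE d j) : P * mulOp c = mulOp c * P := by
  have hle : OpLE d j ≤ (⊥ : AddSubgroup (AddMonoid.End F)).comap
      (AddMonoidHom.mulRight (mulOp c) - AddMonoidHom.mulLeft (mulOp c)) := by
    rw [OpLE, AddSubgroup.closure_le]
    rintro P ⟨a, r, hr, rfl⟩
    show mulOp a * derOp d ^ r * mulOp c - mulOp c * (mulOp a * derOp d ^ r)
      ∈ (⊥ : AddSubgroup (AddMonoid.End F))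
    rw [AddSubgroup.mem_bot, mul_assoc, derPow_mulOp_const hd hc, ← mul_assoc, ← mul_assoc,
      ← mulOp_mul, ← mulOp_mul, mul_comm a c, sub_self]
  have := hle hP
  rw [AddSubgroup.mem_comap, AddSubgroup.mem_bot] at this
  have h2 : P * mulOp c - mulOp c * P = 0 := this
  rw [sub_eq_zero] at h2
  exact h2
end constants

section powers
variable {F : Type} [Field F] {d : F →+ F}

lemma pow_mem_OpLE (hd : IsDeriv d) {n : ℕ} {L : AddMonoid.End F} (hL : L ∈ OpLE d n)
    (k : ℕ) : L ^ k ∈ OpLE d (n * k) := by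
  induction k with
  | zero =>
    rw [pow_zero]
    have : (1 : AddMonoid.End F) = mulOp 1 * derOp d ^ 0 := by rw [mulOp_one, pow_zero, mul_one]
    rw [this]
    exact AddSubgroup.subset_closure ⟨1, 0, Nat.zero_le _, rfl⟩
  | succ k ih =>
    rw [pow_succ]
    exact OpLE_mono d (by ring_nf; omega) (OpLE_mul hd ih hL)

lemma pow_sub_derPow (hd : IsDeriv d) {n : ℕ} {L : AddMonoid.End F}
    (hL : L ∈ OpLE d n) (hLm : L - derOp d ^ n ∈ OpLE d (n - 1)) (k : ℕ) :
    L ^ k - derOp d ^ (n * k) ∈ OpLE d (n * k - 1) := by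
  induction k with
  | zero => simpa using AddSubgroup.zero_mem _
  | succ k ih =>
    rcases Nat.eq_zero_or_pos k with rfl | hk
    · simpa [pow_one] using hLm
    have key : L ^ (k + 1) - derOp d ^ (n * (k + 1))
        = L ^ k * (L - derOp d ^ n) + (L ^ k - derOp d ^ (n * k)) * derOp d ^ n := by
      rw [mul_sub, sub_mul, pow_succ, ← pow_add]
      have : n * k + n = n * (k + 1) := by ring
      rw [this]
      abel
    rw [key]
    refine AddSubgroup.add_mem _ ?_ ?_
    · exact OpLE_mono d (show n * k + (n - 1) ≤ n * (k + 1) - 1 by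
        rcases Nat.eq_zero_or_pos n with rfl | hn
        · simp
        · have : n * (k+1) = n * k + n := by ring
          omega) (OpLE_mul hd (pow_mem_OpLE hd hL k) hLm)
    · refine OpLE_mono d (show n * k - 1 + n ≤ n * (k + 1) - 1 by
        have : n * (k+1) = n * k + n := by ring
        rcases Nat.eq_zero_or_pos n with rfl | hn
        · simp
        · have hnk : 1 ≤ n * k := Nat.one_le_iff_ne_zero.mpr (by positivity)
          omega) ?_
      exact OpLE_mul_derPow n ih

end powers


section cpoly
variable {F : Type} [Field F] {d : F →+ F} {L : AddMonoid.End F}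

lemma zero_mem_CPoly : (0 : AddMonoid.End F) ∈ CPoly d L := by
  refine ⟨0, fun k => by simp, ?_⟩
  simp [mulOp_zero]

lemma rep_ext (p : Polynomial F) {N : ℕ} (hN : p.natDegree ≤ N) :
    ∑ i ∈ Finset.range (p.natDegree + 1), mulOp (p.coeff i) * L ^ i
      = ∑ i ∈ Finset.range (N + 1), mulOp (p.coeff i) * L ^ i := by
  refine Finset.sum_subset ?_ ?_
  · intro i hi
    simp only [Finset.mem_range] at *
    omega
  · intro i _ hi
    simp only [Finset.mem_range] at hi
    have : p.natDegree < i := by omega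
    rw [Polynomial.coeff_eq_zero_of_natDegree_lt this, mulOp_zero, zero_mul]

lemma add_mem_CPoly {P1 P2 : AddMonoid.End F} (h1 : P1 ∈ CPoly d L) (h2 : P2 ∈ CPoly d L) :
    P1 + P2 ∈ CPoly d L := by
  obtain ⟨p, hpc, rfl⟩ := h1
  obtain ⟨q, hqc, rfl⟩ := h2
  refine ⟨p + q, fun k => by rw [Polynomial.coeff_add, map_add, hpc, hqc, add_zero], ?_⟩
  set N := max p.natDegree q.natDegree with hN
  have hpq : (p + q).natDegree ≤ N := Polynomial.natDegree_add_le p q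
  rw [rep_ext (p + q) hpq, rep_ext p (le_max_left _ _), rep_ext q (le_max_right _ _),
    ← Finset.sum_add_distrib]
  refine Finset.sum_congr rfl fun i _ => ?_
  rw [Polynomial.coeff_add, mulOp_add, add_mul]

lemma mulOp_pow_mem_CPoly {a : F} (ha : d a = 0) (k : ℕ) :
    mulOp a * L ^ k ∈ CPoly d L := by
  rcases eq_or_ne a 0 with rfl | ha0
  · rw [mulOp_zero, zero_mul]
    exact zero_mem_CPoly
  refine ⟨Polynomial.C a * Polynomial.X ^ k, fun i => ?_, ?_⟩
  · rw [Polynomial.coeff_C_mul, Polynomial.coeff_X_pow]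
    rcases eq_or_ne i k with rfl | hik
    · simpa using ha
    · simp [hik]
  · rw [Polynomial.natDegree_C_mul_X_pow k a ha0]
    rw [eq_comm, Finset.sum_eq_single k]
    · rw [Polynomial.coeff_C_mul, Polynomial.coeff_X_pow, if_pos rfl, mul_one]
    · intro i _ hik
      rw [Polynomial.coeff_C_mul, Polynomial.coeff_X_pow, if_neg (fun h => hik h),
        mul_zero, mulOp_zero, zero_mul]
    · intro h
      exact absurd (Finset.mem_range.mpr (by omega)) h

lemma CPoly_subset_Cent (hd : IsDeriv d) {nL : ℕ} (hLop : L ∈ OpLE d nL) :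
    CPoly d L ⊆ Cent d L := by
  rintro P ⟨p, hpc, rfl⟩
  constructor
  · refine ⟨nL * p.natDegree, AddSubgroup.sum_mem _ fun i hi => ?_⟩
    have hi' : i ≤ p.natDegree := Nat.lt_succ_iff.mp (Finset.mem_range.mp hi)
    refine mulOp_mul_OpLE _ (OpLE_mono d ?_ (pow_mem_OpLE hd hLop i))
    exact Nat.mul_le_mul_left nL hi'
  · rw [Finset.mul_sum, Finset.sum_mul]
    refine Finset.sum_congr rfl fun i _ => ?_
    rw [← mul_assoc, const_comm hd (hpc i) hLop, mul_assoc, mul_assoc, ← pow_succ', ← pow_succ]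

end cpoly

section main
variable {F : Type} [Field F] [CharZero F] {d : F →+ F} {L : AddMonoid.End F} {n : ℕ}

lemma reduction (hd : IsDeriv d) (hx : ∃ x, d x ≠ 0) (hn : 2 ≤ n)
    (hLop : L ∈ OpLE d n) (hLm : L - derOp d ^ n ∈ OpLE d (n - 1))
    (hdiv : ∀ Q ∈ Cent d L, Q ≠ 0 → ∀ q, HasOrd d Q q → n ∣ q) :
    ∀ m : ℕ, ∀ Q : AddMonoid.End F, Q ∈ Cent d L → Q ∉ CPoly d L → Q ∉ OpLE d m := by
  intro m
  induction m using Nat.strong_induction_on with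
  | _ m ih =>
  intro Q hc hnp hQm
  have hQne : Q ≠ 0 := fun h => hnp (h ▸ zero_mem_CPoly)
  have hex : ∃ j, Q ∈ OpLE d j := ⟨m, hQm⟩
  obtain ⟨m₀, hord, hm₀m⟩ : ∃ m₀, HasOrd d Q m₀ ∧ m₀ ≤ m :=
    ⟨Nat.find hex, ⟨Nat.find_spec hex, fun k hk => Nat.find_min' hex hk⟩,
      Nat.find_min' hex hQm⟩
  obtain ⟨k, hk⟩ := hdiv Q hc hQne m₀ hord
  obtain ⟨f, hf⟩ := (mem_OpLE_iff d).mp hord.1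
  set a := f m₀ with haa
  -- the leading coefficient is constant
  have hda : d a = 0 := by
    rcases Nat.eq_zero_or_pos m₀ with h0 | h1
    · refine const_lead hd hx hn hLm (T := 0) (m := 0) ?_ (Or.inr rfl) hc.2
      rw [pow_zero, mul_one, add_zero, hf, h0, opOf_zero_deg, haa, h0]
    · obtain ⟨m', rfl⟩ : ∃ m', m₀ = m' + 1 := ⟨m₀ - 1, by omega⟩
      refine const_lead hd hx hn hLm (T := opOf d f m') (m := m' + 1) ?_
        (Or.inl ⟨by omega, by simpa using opOf_mem d f m'⟩) hc.2
      rw [hf, opOf_succ]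
      abel
  rcases Nat.eq_zero_or_pos m₀ with h0 | h1
  · -- order 0 : Q is multiplication by a constant
    refine hnp ?_
    have hQa : Q = mulOp a * L ^ 0 := by
      rw [pow_zero, mul_one, hf, h0, opOf_zero_deg, haa, h0]
    exact hQa ▸ mulOp_pow_mem_CPoly hda 0
  · obtain ⟨m', rfl⟩ : ∃ m', m₀ = m' + 1 := ⟨m₀ - 1, by omega⟩
    have ha0 : a ≠ 0 := by
      intro h
      have : Q ∈ OpLE d m' := by
        rw [hf, opOf_succ, ← haa, h, mulOp_zero, zero_mul, add_zero]
        exact opOf_mem d f m'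
      have := hord.2 m' this
      omega
    have hk1 : 1 ≤ k := by
      rcases Nat.eq_zero_or_pos k with rfl | h
      · omega
      · exact h
    set Q' := Q - mulOp a * L ^ k with hQ'
    have hq'mem : Q' ∈ OpLE d m' := by
      have e : Q' = opOf d f m' - mulOp a * (L ^ k - derOp d ^ (n * k)) := by
        rw [hQ', hf, opOf_succ, mul_sub, ← hk, ← haa]
        abel
      rw [e]
      refine AddSubgroup.sub_mem _ (opOf_mem d f m') ?_
      refine mulOp_mul_OpLE a (OpLE_mono d (show n * k - 1 ≤ m' by omega) ?_)
      exact pow_sub_derPow hd hLop hLm k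
    have hLa : L * mulOp a = mulOp a * L := const_comm hd hda hLop
    have hq'c : Q' ∈ Cent d L := by
      refine ⟨⟨m', hq'mem⟩, ?_⟩
      rw [hQ', mul_sub, sub_mul, hc.2, ← mul_assoc, hLa, mul_assoc, mul_assoc,
        ← pow_succ', ← pow_succ]
    have hq'np : Q' ∉ CPoly d L := by
      intro h
      refine hnp ?_
      have e : Q = Q' + mulOp a * L ^ k := by rw [hQ']; abel
      exact e ▸ add_mem_CPoly h (mulOp_pow_mem_CPoly hda k)
    exact ih m' (by omega) Q' hq'c hq'np hq'mem

end main

/-- If `L` is monic of prime order `n` and its centralizer is nontrivial,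
then `L` is algebro-geometric: the gcd of the orders of nonzero elements of `Z(L)` is `1`. -/
theorem prime_order_nontrivial_is_ag {F : Type} [Field F] [CharZero F]
    (d : F →+ F) (hd : IsDeriv d) (L : AddMonoid.End F) (n : ℕ) (hp : n.Prime)
    (hL : MonicOrd d L n) (hnt : Cent d L ≠ CPoly d L) :
    ∀ e : ℕ, (∀ m : ℕ, (∃ Q ∈ Cent d L, Q ≠ 0 ∧ HasOrd d Q m) → e ∣ m) → e = 1 := by
  intro e he
  have hn2 : 2 ≤ n := hp.two_le
  have hLop : L ∈ OpLE d n := hL.1.1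
  have hx : ∃ x, d x ≠ 0 := by
    by_contra h
    push_neg at h
    have hD : derOp d = 0 := AddMonoidHom.ext fun x => h x
    have hle : OpLE d n ≤ OpLE d 0 := by
      rw [OpLE, AddSubgroup.closure_le]
      rintro P ⟨a, i, hi, rfl⟩
      rcases Nat.eq_zero_or_pos i with rfl | hipos
      · exact AddSubgroup.subset_closure ⟨a, 0, le_rfl, rfl⟩
      · rw [hD, zero_pow (by omega), mul_zero]
        exact AddSubgroup.zero_mem _
    have := hL.1.2 0 (hle hLop)
    omega
  have hLC : L ∈ Cent d L := ⟨⟨n, hLop⟩, rfl⟩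
  have hLne : L ≠ 0 := by
    intro h
    have h0 : L ∈ OpLE d 0 := h ▸ AddSubgroup.zero_mem _
    have := hL.1.2 0 h0
    omega
  have hedvd : e ∣ n := he n ⟨L, hLC, hLne, hL.1⟩
  rcases hp.eq_one_or_self_of_dvd e hedvd with h1 | hen
  · exact h1
  · exfalso
    subst hen
    have hdiv : ∀ Q ∈ Cent d L, Q ≠ 0 → ∀ q, HasOrd d Q q → e ∣ q :=
      fun Q hQ hne q hq => he q ⟨Q, hQ, hne, hq⟩
    have hsub : CPoly d L ⊆ Cent d L := CPoly_subset_Cent hd hLop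
    have hnsub : ¬ Cent d L ⊆ CPoly d L := fun h => hnt (Set.Subset.antisymm h hsub)
    obtain ⟨Q, hQc, hQp⟩ := Set.not_subset.mp hnsub
    obtain ⟨m, hm⟩ := hQc.1
    exact reduction hd hx hn2 hLop hL.2 hdiv m Q hQc hQp hm
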